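/- arXiv:0712.4199 — 2 statements merged into one kernel-verified Lean document; each statement's English description precedes it below -/
import Mathlib

section
/- Suppose lim_{L→∞} ess sup_x ∫_{|f(y)| > L} |f(y)|^k P(x, dy) = 0 for an integer k ≥ 1. Then the operators P^{(m)}, 0 ≤ m ≤ k, are bounded on L^∞(μ; ℂ), and the characteristic operator admits the operator-norm MacLaurin expansion ‖ P̂(θ) − Σ_{m=0}^{k} ((iθ)^m / m!) P^{(m)} ‖ = o(|θ|^k) as θ → 0; i.e., θ ↦ P̂(θ) is k-times strongly differentiable at θ = 0 with m-th derivative i^m P^{(m)}. -/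
open MeasureTheory ProbabilityTheory Filter Complex Asymptotics
open scoped ENNReal Topology BigOperators NNReal

noncomputable section

namespace Edgeworth

variable {S : Type*} [MeasurableSpace S]

/-- Condition (Ψ): `α μ(A) ≤ P(x,A) ≤ β μ(A)` for μ-a.a. x, for every A with μ(A)>0. -/
def CondPsi (P : Kernel S S) (μ : Measure S) (α β : ℝ) : Prop :=
  ∀ A : Set S, MeasurableSet A → 0 < μ A →
    ∀ᵐ x ∂μ, α * (μ A).toReal ≤ ((P x) A).toReal ∧ ((P x) A).toReal ≤ β * (μ A).toReal

/-- π is a stationary distribution for the kernel P. -/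
def Stationary (P : Kernel S S) (π : Measure S) : Prop :=
  ∀ A : Set S, MeasurableSet A → ∫⁻ x, P x A ∂π = π A

/-- The norm ‖K‖₊ : sup of ‖K g‖ over a.e.-nonnegative (real-valued) g in the unit ball of L^∞. -/
def plusNorm {μ : Measure S} (K : Lp ℂ ⊤ μ →L[ℂ] Lp ℂ ⊤ μ) : ℝ :=
  sSup {r : ℝ | ∃ g : Lp ℂ ⊤ μ,
    (∀ᵐ x ∂μ, ∃ t : ℝ, 0 ≤ t ∧ g x = (t : ℂ)) ∧ ‖g‖ ≤ 1 ∧ r = ‖K g‖}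

/-- Iterated kernel integral: `kiter P f g c n x s = E_x[ 1{s + f(ξ₁)+⋯+f(ξₙ) < c} g(ξₙ) ]`
(with `ξ₀ = x`; for `n = 0` it is `1{s<c} g(x)`). -/
def kiter (P : Kernel S S) (f : S → ℝ) (g : S → ℂ) (c : ℝ) : ℕ → S → ℝ → ℂ
  | 0, x, s => if s < c then g x else 0
  | n+1, x, s => ∫ y, kiter P f g c n y (s + f y) ∂(P x)

/-- Iterated kernel integral for real functionals:
`eiter P f φ n x s = E_x[ φ(ξₙ, s + f(ξ₁)+⋯+f(ξₙ)) ]`. -/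
def eiter (P : Kernel S S) (f : S → ℝ) (φ : S → ℝ → ℝ) : ℕ → S → ℝ → ℝ
  | 0, x, s => φ x s
  | n+1, x, s => ∫ y, eiter P f φ n y (s + f y) ∂(P x)

/-- n-fold composition of the kernel P. -/
def kpow (P : Kernel S S) : ℕ → Kernel S S
  | 0 => Kernel.id
  | n+1 => Kernel.comp (kpow P n) P

/-- σ² = E_π[f(ξ₀)²] + 2 Σ_{n≥1} E_π[f(ξ₀) f(ξₙ)] for the stationary chain. -/
def sigmaSq (P : Kernel S S) (π : Measure S) (f : S → ℝ) : ℝ :=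
  (∫ x, f x ^ 2 ∂π) + 2 * ∑' n : ℕ, ∫ x, f x * ∫ y, f y ∂(kpow P (n + 1) x) ∂π

/-- E_π[Sₙ³], the third moment of Sₙ under the stationary initial distribution. -/
def thirdMoment (P : Kernel S S) (π : Measure S) (f : S → ℝ) (n : ℕ) : ℝ :=
  ∫ x, eiter P f (fun _ s => s ^ 3) n x 0 ∂π

/-- The standard normal density 𝔫. -/
def stdPdf (z : ℝ) : ℝ := Real.exp (-z ^ 2 / 2) / Real.sqrt (2 * Real.pi)

/-- The standard normal distribution function 𝔑. -/
def stdCdf (z : ℝ) : ℝ := ∫ u in Set.Iio z, stdPdf u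

/-- Evaluation of the k-th (probabilists') Hermite polynomial. -/
def hermiteEval (k : ℕ) (z : ℝ) : ℝ := Polynomial.aeval z (Polynomial.hermite k)

/-- The index set 𝒦_m = {(k₁,…,k_m) : Σ i kᵢ = m}, encoded with kᵢ ≤ m. -/
def Kcal (m : ℕ) : Finset (Fin m → Fin (m + 1)) :=
  Finset.univ.filter fun k => ∑ i : Fin m, ((i : ℕ) + 1) * (k i : ℕ) = m

/-- The characteristic function μ̂_f(θ) = ∫ e^{iθ f(y)} μ(dy). -/
def charFn (μ : Measure S) (f : S → ℝ) (θ : ℝ) : ℂ :=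
  ∫ y, Complex.exp (Complex.I * θ * f y) ∂μ

/-- The constant function 1 as an element of L^∞(μ;ℂ). -/
def oneL (μ : Measure S) : Lp ℂ ⊤ μ := (memLp_top_const (1 : ℂ)).toLp _

/-- The coefficient a_j(z) of the Edgeworth operator A_{ν,z}. -/
def acoef (γ : ℕ → ℝ) (σ : ℝ) (ν j : ℕ) (z : ℝ) : ℝ :=
  -(stdPdf z) * ∑ kt ∈ Kcal (ν - j),
    (1 / (j.factorial * σ ^ j)) *
      (∏ i : Fin (ν - j),
        (1 / ((kt i : ℕ).factorial : ℝ)) *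
          (γ ((i : ℕ) + 3) / (((i : ℕ) + 3).factorial * σ ^ ((i : ℕ) + 3))) ^ ((kt i : ℕ))) *
      hermiteEval (ν - 1 + 2 * ∑ i, (kt i : ℕ)) z

/-- The Edgeworth operators A_{ν,z}. -/
def Aop {μ : Measure S} (Pi : Lp ℂ ⊤ μ →L[ℂ] Lp ℂ ⊤ μ)
    (P1m : ℕ → (Lp ℂ ⊤ μ →L[ℂ] Lp ℂ ⊤ μ)) (γ : ℕ → ℝ) (σ : ℝ) :
    ℕ → ℝ → (Lp ℂ ⊤ μ →L[ℂ] Lp ℂ ⊤ μ)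
  | 0, z => (stdCdf z : ℂ) • Pi
  | ν + 1, z => ∑ j ∈ Finset.range (ν + 2), ((acoef γ σ (ν + 1) j z : ℝ) : ℂ) • P1m j

/-- 𝔓_ν(iθ), the ν-th Cramér–Edgeworth polynomial built from the cumulants γ. -/
def frakP (γ : ℕ → ℝ) (σ : ℝ) (ν : ℕ) (θ : ℝ) : ℂ :=
  ∑ kt ∈ Kcal ν,
    ∏ i : Fin ν,
      (1 / ((kt i : ℕ).factorial : ℂ)) *
        ((γ ((i : ℕ) + 3) : ℂ) * (Complex.I * θ) ^ ((i : ℕ) + 3) /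
            ((((i : ℕ) + 3).factorial : ℂ) * (σ : ℂ) ^ ((i : ℕ) + 3))) ^ ((kt i : ℕ))


/-- Taylor remainder of `exp(it)` of order `n`. -/
noncomputable def expRem (n : ℕ) (t : ℝ) : ℂ :=
  Complex.exp (Complex.I * t) - ∑ m ∈ Finset.range n, (Complex.I * t) ^ m / m.factorial

lemma hasDerivAt_expRem (n : ℕ) (t : ℝ) :
    HasDerivAt (fun s : ℝ => expRem (n + 1) s) (Complex.I * expRem n t) t := by
  have h0 : HasDerivAt (fun s : ℝ => (Complex.I * (s : ℂ))) Complex.I t := by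
    simpa using (Complex.ofRealCLM.hasDerivAt (x := t)).const_mul Complex.I
  have hexp : HasDerivAt (fun s : ℝ => Complex.exp (Complex.I * s))
      (Complex.exp (Complex.I * t) * Complex.I) t := h0.cexp
  have hsum : HasDerivAt (fun s : ℝ => ∑ m ∈ Finset.range (n + 1), (Complex.I * s) ^ m / m.factorial)
      (∑ m ∈ Finset.range (n + 1), ((m : ℂ) * (Complex.I * t) ^ (m - 1) * Complex.I) / m.factorial) t := by
    refine HasDerivAt.fun_sum fun m _ => HasDerivAt.div_const ?_ _
    have hz : HasDerivAt (fun z : ℂ => (Complex.I * z) ^ m)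
        ((m : ℂ) * (Complex.I * t) ^ (m - 1) * Complex.I) (t : ℂ) := by
      simpa using ((hasDerivAt_id ((t : ℝ) : ℂ)).const_mul Complex.I).fun_pow m
    exact hz.comp_ofReal
  have heq : (∑ m ∈ Finset.range (n + 1), ((m : ℂ) * (Complex.I * t) ^ (m - 1) * Complex.I) / m.factorial)
      = Complex.I * ∑ j ∈ Finset.range n, (Complex.I * t) ^ j / j.factorial := by
    rw [Finset.sum_range_succ', Finset.mul_sum]
    simp only [Nat.cast_zero, zero_mul, Nat.factorial_zero, Nat.cast_one, div_one, add_zero,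
      pow_zero]
    refine Finset.sum_congr rfl fun j _ => ?_
    have hj := Nat.cast_add_one_ne_zero (R := ℂ) j
    simp only [Nat.add_sub_cancel]
    calc ((j + 1 : ℕ) : ℂ) * (Complex.I * t) ^ j * Complex.I / ((j + 1).factorial : ℂ)
        = (((j : ℂ) + 1) * ((Complex.I * t) ^ j * Complex.I)) /
            (((j : ℂ) + 1) * (j.factorial : ℂ)) := by
          push_cast [Nat.factorial_succ]; ring
      _ = ((Complex.I * t) ^ j * Complex.I) / (j.factorial : ℂ) := mul_div_mul_left _ _ hj
      _ = Complex.I * ((Complex.I * t) ^ j / j.factorial) := by ring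
  have := hexp.fun_sub hsum
  rw [heq] at this
  convert this using 1
  · rfl
  all_goals (unfold expRem; ring)

lemma conj_expRem (n : ℕ) (t : ℝ) :
    expRem n t = (starRingEnd ℂ) (expRem n (-t)) := by
  unfold expRem
  have harg : (starRingEnd ℂ) (Complex.I * ((-t : ℝ) : ℂ)) = Complex.I * (t : ℂ) := by
    simp [Complex.conj_I, Complex.conj_ofReal]
  rw [map_sub, map_sum, ← Complex.exp_conj, harg]
  congr 1
  refine Finset.sum_congr rfl fun m _ => ?_
  rw [map_div₀, map_pow, harg]
  norm_num

lemma norm_expRem_le_nonneg : ∀ (n : ℕ) (t : ℝ), 0 ≤ t → ‖expRem n t‖ ≤ t ^ n / n.factorial := by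
  intro n
  induction n with
  | zero =>
    intro t ht
    simp [expRem, Complex.norm_exp]
  | succ n ih =>
    intro t ht
    have hcont : Continuous fun s : ℝ => Complex.I * expRem n s := by
      unfold expRem; fun_prop
    have hint := intervalIntegral.integral_eq_sub_of_hasDerivAt
      (f := fun s : ℝ => expRem (n + 1) s) (a := 0) (b := t)
      (fun s _ => hasDerivAt_expRem n s) (hcont.intervalIntegrable 0 t)
    have h00 : expRem (n + 1) 0 = 0 := by
      unfold expRem
      rw [Finset.sum_range_succ']
      simp
    rw [h00, sub_zero] at hint
    have hb : ‖∫ s in (0:ℝ)..t, Complex.I * expRem n s‖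
        ≤ |∫ s in (0:ℝ)..t, s ^ n / n.factorial| := by
      refine intervalIntegral.norm_integral_le_abs_of_norm_le ?_
        (((continuous_pow n).div_const _).intervalIntegrable 0 t)
      refine (MeasureTheory.ae_restrict_iff' measurableSet_uIoc).2 ?_
      refine Filter.Eventually.of_forall fun s hs => ?_
      rw [Set.uIoc_of_le ht] at hs
      have hs0 : 0 ≤ s := hs.1.le
      rw [norm_mul, Complex.norm_I, one_mul]
      simpa [_root_.abs_of_nonneg hs0] using ih s hs0
    have hval : (∫ s in (0:ℝ)..t, s ^ n / n.factorial)
        = t ^ (n + 1) / (n + 1).factorial := by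
      rw [intervalIntegral.integral_div, integral_pow, zero_pow (Nat.succ_ne_zero n), sub_zero]
      rw [Nat.factorial_succ]
      push_cast
      field_simp
    rw [← hint]
    exact hb.trans_eq (by rw [hval, _root_.abs_of_nonneg (by positivity)])

lemma norm_expRem_le (n : ℕ) (t : ℝ) : ‖expRem n t‖ ≤ |t| ^ n / n.factorial := by
  rcases le_total 0 t with h | h
  · rw [_root_.abs_of_nonneg h]; exact norm_expRem_le_nonneg n t h
  · rw [conj_expRem]
    rw [_root_.abs_of_nonpos h]
    simpa [Complex.norm_conj] using
      norm_expRem_le_nonneg n (-t) (by linarith)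

lemma Lp_coeFn_finset_sum {μ : Measure S} {ι : Type*} (s : Finset ι) (h : ι → Lp ℂ ⊤ μ) :
    ⇑(∑ i ∈ s, h i) =ᵐ[μ] fun x => ∑ i ∈ s, h i x := by
  classical
  induction s using Finset.induction with
  | empty => simp only [Finset.sum_empty]; exact Lp.coeFn_zero ℂ ⊤ μ
  | @insert a s ha ih =>
    rw [Finset.sum_insert ha]
    filter_upwards [Lp.coeFn_add (h a) (∑ i ∈ s, h i), ih] with x h1 h2
    rw [h1, Pi.add_apply, h2, Finset.sum_insert ha]

lemma exists_weightOp (μ : Measure S) [IsProbabilityMeasure μ]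
    (P : Kernel S S) [IsMarkovKernel P] (habs : ∀ x, P x ≪ μ)
    (w : S → ℂ) (hw : Measurable w) {C : ℝ} (hC : 0 ≤ C)
    (hbound : ∀ᵐ x ∂μ, ∫⁻ y, ‖w y‖₊ ∂(P x) ≤ ENNReal.ofReal C) :
    ∃ T : Lp ℂ ⊤ μ →L[ℂ] Lp ℂ ⊤ μ,
      (∀ g : Lp ℂ ⊤ μ, ∀ᵐ x ∂μ, Integrable (fun y => w y * g y) (P x)) ∧
      ∀ g : Lp ℂ ⊤ μ, (T g : S → ℂ) =ᵐ[μ] fun x => ∫ y, w y * g y ∂(P x) := by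
  set F : Lp ℂ ⊤ μ → S → ℂ := fun g x => ∫ y, w y * g y ∂(P x) with hF
  have hGb : ∀ g : Lp ℂ ⊤ μ, eLpNormEssSup (g : S → ℂ) μ = ENNReal.ofReal ‖g‖ := by
    intro g
    rw [Lp.norm_def, eLpNorm_exponent_top, ENNReal.ofReal_toReal]
    rw [← eLpNorm_exponent_top]
    exact Lp.eLpNorm_ne_top g
  have key : ∀ g : Lp ℂ ⊤ μ, ∀ᵐ x ∂μ,
      ∫⁻ y, ‖w y * g y‖₊ ∂(P x) ≤ ENNReal.ofReal C * ENNReal.ofReal ‖g‖ := by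
    intro g
    filter_upwards [hbound] with x hx
    have h1 : ∀ᵐ y ∂(P x), (‖g y‖₊ : ℝ≥0∞) ≤ ENNReal.ofReal ‖g‖ := by
      refine (habs x).ae_le ?_
      filter_upwards [ae_le_eLpNormEssSup (f := (g : S → ℂ)) (μ := μ)] with y hy
      exact hy.trans_eq (hGb g)
    calc ∫⁻ y, ‖w y * g y‖₊ ∂(P x)
        ≤ ∫⁻ y, ‖w y‖₊ * ENNReal.ofReal ‖g‖ ∂(P x) := by
          refine lintegral_mono_ae (h1.mono fun y hy => ?_)
          rw [nnnorm_mul, ENNReal.coe_mul]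
          exact mul_le_mul_right hy _
      _ = (∫⁻ y, ‖w y‖₊ ∂(P x)) * ENNReal.ofReal ‖g‖ :=
          lintegral_mul_const' _ _ (by simp)
      _ ≤ ENNReal.ofReal C * ENNReal.ofReal ‖g‖ := mul_le_mul_left hx _
  have hint : ∀ g : Lp ℂ ⊤ μ, ∀ᵐ x ∂μ, Integrable (fun y => w y * g y) (P x) := by
    intro g
    filter_upwards [key g] with x hx
    refine ⟨(hw.aestronglyMeasurable.mul (Lp.stronglyMeasurable g).aestronglyMeasurable), ?_⟩
    exact lt_of_le_of_lt hx (by finiteness)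
  have hSM : ∀ g : Lp ℂ ⊤ μ, StronglyMeasurable (F g) := by
    intro g
    exact StronglyMeasurable.integral_kernel_prod_right'
      (f := fun p : S × S => w p.2 * g p.2)
      ((hw.stronglyMeasurable.comp_measurable measurable_snd).mul
        ((Lp.stronglyMeasurable g).comp_measurable measurable_snd))
  have hb : ∀ g : Lp ℂ ⊤ μ, ∀ᵐ x ∂μ, ‖F g x‖ ≤ C * ‖g‖ := by
    intro g
    filter_upwards [key g] with x hx
    calc ‖F g x‖ ≤ (∫⁻ y, ENNReal.ofReal ‖w y * g y‖ ∂(P x)).toReal :=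
          norm_integral_le_lintegral_norm _
      _ = (∫⁻ y, (‖w y * g y‖₊ : ℝ≥0∞) ∂(P x)).toReal := by
          simp_rw [ofReal_norm, enorm_eq_nnnorm]
      _ ≤ (ENNReal.ofReal C * ENNReal.ofReal ‖g‖).toReal :=
          ENNReal.toReal_mono (by finiteness) hx
      _ ≤ C * ‖g‖ := by
          rw [← ENNReal.ofReal_mul hC, ENNReal.toReal_ofReal (by positivity)]
  have hmem : ∀ g : Lp ℂ ⊤ μ, MemLp (F g) ⊤ μ := fun g =>
    memLp_top_of_bound (hSM g).aestronglyMeasurable _ (hb g)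
  set T₀ : Lp ℂ ⊤ μ →ₗ[ℂ] Lp ℂ ⊤ μ :=
    { toFun := fun g => (hmem g).toLp (F g)
      map_add' := by
        intro g h
        rw [← MemLp.toLp_add (hmem g) (hmem h)]
        refine MemLp.toLp_congr _ _ ?_
        filter_upwards [hint g, hint h] with x hxg hxh
        have hco : ∀ᵐ y ∂(P x), (g + h) y = g y + h y := (habs x).ae_le (Lp.coeFn_add g h)
        have : F (g + h) x = ∫ y, (w y * g y + w y * h y) ∂(P x) := by
          refine integral_congr_ae (hco.mono fun y hy => ?_)
          show w y * (g + h) y = w y * g y + w y * h y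
          rw [hy]; ring
        rw [Pi.add_apply, this, integral_add hxg hxh]
      map_smul' := by
        intro c g
        show (hmem (c • g)).toLp (F (c • g)) = c • (hmem g).toLp (F g)
        rw [← MemLp.toLp_const_smul c (hmem g)]
        refine MemLp.toLp_congr _ _ ?_
        filter_upwards [hint g] with x hxg
        have hco : ∀ᵐ y ∂(P x), (c • g) y = c • g y := (habs x).ae_le (Lp.coeFn_smul c g)
        have : F (c • g) x = ∫ y, c • (w y * g y) ∂(P x) := by
          refine integral_congr_ae (hco.mono fun y hy => ?_)
          show w y * (c • g) y = c • (w y * g y)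
          rw [hy]; simp [smul_eq_mul]; ring
        rw [Pi.smul_apply, this, integral_smul] }
  refine ⟨T₀.mkContinuous C fun g => ?_, hint, fun g => MemLp.coeFn_toLp (hmem g)⟩
  show ‖(hmem g).toLp (F g)‖ ≤ C * ‖g‖
  rw [Lp.norm_toLp, eLpNorm_exponent_top]
  refine ENNReal.toReal_le_of_le_ofReal (by positivity) ?_
  exact eLpNormEssSup_le_of_ae_bound (hb g)


set_option maxHeartbeats 1000000 in
/-- the uniform tail-moment condition implies that the operators P^{(m)}, 0 ≤ m ≤ k,
are bounded and that the characteristic operator admits an operator-norm MacLaurin expansion of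
order k at θ = 0. -/
theorem charOp_macLaurin
    {S : Type*} [MeasurableSpace S] (μ : Measure S) [IsProbabilityMeasure μ]
    (P : Kernel S S) [IsMarkovKernel P] (f : S → ℝ) (hf : Measurable f)
    (habs : ∀ x, P x ≪ μ)
    (k : ℕ) (hk : 1 ≤ k)
    (Phat : ℝ → (Lp ℂ ⊤ μ →L[ℂ] Lp ℂ ⊤ μ))
    (hPhat : ∀ (θ : ℝ) (g : Lp ℂ ⊤ μ), ∀ᵐ x ∂μ,
      Phat θ g x = ∫ y, Complex.exp (Complex.I * θ * f y) * g y ∂(P x))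
    (hmom : Tendsto
      (fun L : ℝ =>
        essSup (fun x => ∫⁻ y in {y | L < |f y|}, ENNReal.ofReal (|f y| ^ k) ∂(P x)) μ)
      atTop (𝓝 0)) :
    ∃ Pm : ℕ → (Lp ℂ ⊤ μ →L[ℂ] Lp ℂ ⊤ μ),
      (∀ m : ℕ, m ≤ k → ∀ g : Lp ℂ ⊤ μ, ∀ᵐ x ∂μ,
        Pm m g x = ∫ y, (f y : ℂ) ^ m * g y ∂(P x)) ∧
      (fun θ : ℝ =>
          Phat θ - ∑ m ∈ Finset.range (k + 1),
            (((Complex.I * θ) ^ m / (m.factorial : ℂ)) • Pm m))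
        =o[𝓝 0] fun θ : ℝ => |θ| ^ k := by
  classical
  set tail : ℝ → S → ℝ≥0∞ :=
    fun L x => ∫⁻ y in {y | L < |f y|}, ENNReal.ofReal (|f y| ^ k) ∂(P x) with htaildef
  have hmeasset : ∀ L : ℝ, MeasurableSet {y : S | L < |f y|} :=
    fun L => measurableSet_lt measurable_const hf.abs
  have htail : ∀ ε : ℝ, 0 < ε → ∃ L : ℝ, 1 ≤ L ∧ ∀ᵐ x ∂μ, tail L x ≤ ENNReal.ofReal ε := by
    intro ε hε
    have h1 : ∀ᶠ L in atTop, essSup (fun x => tail L x) μ < ENNReal.ofReal ε :=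
      hmom.eventually_lt_const (ENNReal.ofReal_pos.2 hε)
    obtain ⟨L, hL1, hL2⟩ := ((eventually_ge_atTop (1 : ℝ)).and h1).exists
    exact ⟨L, hL1, (ENNReal.ae_le_essSup (tail L)).mono fun x hx => hx.trans hL2.le⟩
  obtain ⟨L₀, hL₀1, hL₀⟩ := htail 1 one_pos
  have hL₀0 : (0:ℝ) ≤ L₀ := by linarith
  have hL₀k : (0:ℝ) ≤ L₀ ^ k := pow_nonneg hL₀0 k
  have hIk : ∀ᵐ x ∂μ, ∫⁻ y, ENNReal.ofReal (|f y| ^ k) ∂(P x)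
      ≤ ENNReal.ofReal (L₀ ^ k + 1) := by
    filter_upwards [hL₀] with x hx
    have hpt : ∀ y, ENNReal.ofReal (|f y| ^ k)
        ≤ ENNReal.ofReal (L₀ ^ k) + Set.indicator {y : S | L₀ < |f y|}
            (fun y => ENNReal.ofReal (|f y| ^ k)) y := by
      intro y
      rw [Set.indicator_apply]
      by_cases h : y ∈ {y : S | L₀ < |f y|}
      · rw [if_pos h]
        exact le_add_self
      · rw [if_neg h, add_zero]
        rw [Set.mem_setOf_eq, not_lt] at h
        exact ENNReal.ofReal_le_ofReal (pow_le_pow_left₀ (abs_nonneg _) h k)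
    calc ∫⁻ y, ENNReal.ofReal (|f y| ^ k) ∂(P x)
        ≤ ∫⁻ y, (ENNReal.ofReal (L₀ ^ k) + Set.indicator {y : S | L₀ < |f y|}
            (fun y => ENNReal.ofReal (|f y| ^ k)) y) ∂(P x) := lintegral_mono hpt
      _ = ENNReal.ofReal (L₀ ^ k) + tail L₀ x := by
          rw [lintegral_add_left measurable_const, lintegral_const, measure_univ, mul_one,
            lintegral_indicator (hmeasset L₀)]
      _ ≤ ENNReal.ofReal (L₀ ^ k) + ENNReal.ofReal 1 := add_le_add_right hx _
      _ = ENNReal.ofReal (L₀ ^ k + 1) := (ENNReal.ofReal_add hL₀k zero_le_one).symm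
  have hfC : Measurable fun y => ((f y : ℝ) : ℂ) := Complex.measurable_ofReal.comp hf
  have hImBound : ∀ m : ℕ, m ≤ k → ∀ᵐ x ∂μ,
      ∫⁻ y, (‖((f y : ℝ) : ℂ) ^ m‖₊ : ℝ≥0∞) ∂(P x) ≤ ENNReal.ofReal (L₀ ^ k + 2) := by
    intro m hm
    filter_upwards [hIk] with x hx
    have hpt : ∀ y, (‖((f y : ℝ) : ℂ) ^ m‖₊ : ℝ≥0∞)
        ≤ ENNReal.ofReal 1 + ENNReal.ofReal (|f y| ^ k) := by
      intro y
      have h1 : ‖((f y : ℝ) : ℂ) ^ m‖ = |f y| ^ m := by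
        rw [norm_pow, Complex.norm_real, Real.norm_eq_abs]
      rw [← enorm_eq_nnnorm, ← ofReal_norm, h1,
        ← ENNReal.ofReal_add zero_le_one (by positivity)]
      refine ENNReal.ofReal_le_ofReal ?_
      rcases le_total (|f y|) 1 with h | h
      · have h2 := pow_le_one₀ (abs_nonneg (f y)) h (n := m)
        have h3 : (0:ℝ) ≤ |f y| ^ k := by positivity
        linarith
      · have h2 := pow_le_pow_right₀ h hm
        linarith
    calc ∫⁻ y, (‖((f y : ℝ) : ℂ) ^ m‖₊ : ℝ≥0∞) ∂(P x)
        ≤ ∫⁻ y, (ENNReal.ofReal 1 + ENNReal.ofReal (|f y| ^ k)) ∂(P x) := lintegral_mono hpt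
      _ = ENNReal.ofReal 1 + ∫⁻ y, ENNReal.ofReal (|f y| ^ k) ∂(P x) := by
          rw [lintegral_add_left measurable_const, lintegral_const, measure_univ, mul_one]
      _ ≤ ENNReal.ofReal 1 + ENNReal.ofReal (L₀ ^ k + 1) := add_le_add_right hx _
      _ = ENNReal.ofReal (L₀ ^ k + 2) := by
          rw [← ENNReal.ofReal_add zero_le_one (by linarith)]
          congr 1
          ring
  have hPmEx : ∀ m : ℕ, m ≤ k → ∃ T : Lp ℂ ⊤ μ →L[ℂ] Lp ℂ ⊤ μ,
      (∀ g : Lp ℂ ⊤ μ, ∀ᵐ x ∂μ,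
        Integrable (fun y => ((f y : ℝ) : ℂ) ^ m * g y) (P x)) ∧
      ∀ g : Lp ℂ ⊤ μ, (T g : S → ℂ) =ᵐ[μ]
        fun x => ∫ y, ((f y : ℝ) : ℂ) ^ m * g y ∂(P x) :=
    fun m hm => exists_weightOp μ P habs _ (hfC.pow_const m) (by linarith) (hImBound m hm)
  set Pm : ℕ → (Lp ℂ ⊤ μ →L[ℂ] Lp ℂ ⊤ μ) :=
    fun m => if h : m ≤ k then (hPmEx m h).choose else 0 with hPmdef
  have hPmInt : ∀ (m : ℕ), m ≤ k → ∀ g : Lp ℂ ⊤ μ, ∀ᵐ x ∂μ,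
      Integrable (fun y => ((f y : ℝ) : ℂ) ^ m * g y) (P x) :=
    fun m hm g => (hPmEx m hm).choose_spec.1 g
  have hPmAE : ∀ (m : ℕ), m ≤ k → ∀ g : Lp ℂ ⊤ μ, (Pm m g : S → ℂ) =ᵐ[μ]
      fun x => ∫ y, ((f y : ℝ) : ℂ) ^ m * g y ∂(P x) := by
    intro m hm g
    rw [hPmdef]
    simp only [dif_pos hm]
    exact (hPmEx m hm).choose_spec.2 g
  refine ⟨Pm, fun m hm g => hPmAE m hm g, ?_⟩
  rw [Asymptotics.isLittleO_iff]
  intro c hc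
  have hkfac : (0:ℝ) < k.factorial := by exact_mod_cast k.factorial_pos
  have hk1fac : (0:ℝ) < (k+1).factorial := by exact_mod_cast (k+1).factorial_pos
  obtain ⟨L, hL1, hLae⟩ := htail (c * k.factorial / 4) (by positivity)
  have hL0 : (0:ℝ) < L := lt_of_lt_of_le one_pos hL1
  set δ : ℝ := c * (k+1).factorial / (2 * L ^ (k+1)) with hδdef
  have hδ : 0 < δ := by positivity
  filter_upwards [eventually_abs_sub_lt (0:ℝ) hδ] with θ hθ
  rw [sub_zero] at hθ
  rw [Real.norm_eq_abs, _root_.abs_pow, _root_.abs_abs]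
  set T : Lp ℂ ⊤ μ →L[ℂ] Lp ℂ ⊤ μ :=
    ∑ m ∈ Finset.range (k + 1), (((Complex.I * θ) ^ m / (m.factorial : ℂ)) • Pm m) with hTdef
  refine ContinuousLinearMap.opNorm_le_bound _ (by positivity) fun g => ?_
  have haeg : ∀ x : S, ∀ᵐ y ∂(P x), ‖(g : S → ℂ) y‖ ≤ ‖g‖ := by
    intro x
    refine (habs x).ae_le ?_
    filter_upwards [ae_le_eLpNormEssSup (f := (g : S → ℂ)) (μ := μ)] with y hy
    have h2 : eLpNormEssSup (g : S → ℂ) μ = ENNReal.ofReal ‖g‖ := by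
      rw [Lp.norm_def, eLpNorm_exponent_top, ENNReal.ofReal_toReal]
      rw [← eLpNorm_exponent_top]; exact Lp.eLpNorm_ne_top g
    rw [h2, ← ofReal_norm] at hy
    exact (ENNReal.ofReal_le_ofReal_iff (norm_nonneg _)).1 hy
  have hexpnorm : ∀ y : S, ‖Complex.exp (Complex.I * θ * f y)‖ = 1 := by
    intro y
    have : Complex.I * θ * f y = ((θ * f y : ℝ) : ℂ) * Complex.I := by push_cast; ring
    rw [this]
    exact Complex.norm_exp_ofReal_mul_I _
  have hexpMeas : Measurable fun y => Complex.exp (Complex.I * (θ : ℂ) * f y) :=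
    Complex.measurable_exp.comp (measurable_const.mul hfC)
  have hIexp : ∀ x : S, Integrable
      (fun y => Complex.exp (Complex.I * θ * f y) * (g : S → ℂ) y) (P x) := by
    intro x
    refine Integrable.mono' (integrable_const ‖g‖)
      (hexpMeas.aestronglyMeasurable.mul (Lp.stronglyMeasurable g).aestronglyMeasurable) ?_
    filter_upwards [haeg x] with y hy
    rw [norm_mul, hexpnorm y, one_mul]
    exact hy
  have harg : ∀ y : S, Complex.I * ((θ * f y : ℝ) : ℂ) = Complex.I * θ * f y := by
    intro y; push_cast; ring
  -- splitting the integral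
  have hsplit : ∀ x : S,
      (∀ m ∈ Finset.range (k + 1),
        Integrable (fun y => ((f y : ℝ) : ℂ) ^ m * g y) (P x)) →
      ∫ y, expRem (k + 1) (θ * f y) * (g : S → ℂ) y ∂(P x)
        = (∫ y, Complex.exp (Complex.I * θ * f y) * g y ∂(P x))
          - ∑ m ∈ Finset.range (k + 1),
              ((Complex.I * θ) ^ m / (m.factorial : ℂ))
                * ∫ y, ((f y : ℝ) : ℂ) ^ m * g y ∂(P x) := by
    intro x hx
    have hpt : ∀ y, expRem (k + 1) (θ * f y) * (g : S → ℂ) y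
        = Complex.exp (Complex.I * θ * f y) * g y
          - ∑ m ∈ Finset.range (k + 1),
              ((Complex.I * θ) ^ m / (m.factorial : ℂ)) * (((f y : ℝ) : ℂ) ^ m * g y) := by
      intro y
      unfold expRem
      rw [harg y, sub_mul, Finset.sum_mul]
      congr 1
      refine Finset.sum_congr rfl fun m _ => ?_
      rw [← harg y, mul_pow, mul_pow]
      push_cast
      ring
    simp_rw [hpt]
    rw [integral_sub (hIexp x)
      (integrable_finset_sum _ fun m hm => ((hx m hm).const_mul _))]
    congr 1
    rw [integral_finset_sum _ fun m hm => (hx m hm).const_mul _]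
    exact Finset.sum_congr rfl fun m hm => integral_const_mul _ _
  -- a.e. representation of the remainder operator
  have hIntsAll : ∀ᵐ x ∂μ, ∀ m ∈ Finset.range (k + 1),
      Integrable (fun y => ((f y : ℝ) : ℂ) ^ m * g y) (P x) :=
    (eventually_all_finset _).2 fun m hm =>
      hPmInt m (Nat.lt_succ_iff.1 (Finset.mem_range.1 hm)) g
  have hTco : ((T g : Lp ℂ ⊤ μ) : S → ℂ) =ᵐ[μ] fun x =>
      ∑ m ∈ Finset.range (k + 1),
        ((Complex.I * θ) ^ m / (m.factorial : ℂ))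
          * ∫ y, ((f y : ℝ) : ℂ) ^ m * g y ∂(P x) := by
    have e1 : T g = ∑ m ∈ Finset.range (k + 1),
        ((Complex.I * θ) ^ m / (m.factorial : ℂ)) • (Pm m g) := by
      rw [hTdef]
      simp [ContinuousLinearMap.sum_apply]
    rw [e1]
    refine (Lp_coeFn_finset_sum _ _).trans ?_
    have e2 : ∀ m ∈ Finset.range (k + 1), ∀ᵐ x ∂μ,
        ((((Complex.I * θ) ^ m / (m.factorial : ℂ)) • (Pm m g) : Lp ℂ ⊤ μ) : S → ℂ) x
          = ((Complex.I * θ) ^ m / (m.factorial : ℂ))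
              * ∫ y, ((f y : ℝ) : ℂ) ^ m * g y ∂(P x) := by
      intro m hm
      filter_upwards [Lp.coeFn_smul ((Complex.I * θ) ^ m / (m.factorial : ℂ)) (Pm m g),
        hPmAE m (Nat.lt_succ_iff.1 (Finset.mem_range.1 hm)) g] with x h1 h2
      rw [h1, Pi.smul_apply, h2, smul_eq_mul]
    filter_upwards [(eventually_all_finset _).2 e2] with x hx
    exact Finset.sum_congr rfl fun m hm => hx m hm
  have hDrep : ∀ᵐ x ∂μ, (((Phat θ - T) g : Lp ℂ ⊤ μ) : S → ℂ) x
      = ∫ y, expRem (k + 1) (θ * f y) * (g : S → ℂ) y ∂(P x) := by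
    have hsubapp : (Phat θ - T) g = Phat θ g - T g := rfl
    rw [hsubapp]
    filter_upwards [Lp.coeFn_sub (Phat θ g) (T g), hPhat θ g, hTco, hIntsAll]
      with x h1 h2 h3 h4
    rw [h1, Pi.sub_apply, h2, h3, hsplit x h4]
  -- the quantitative bound
  have hbound : ∀ᵐ x ∂μ,
      ∫⁻ y, (‖expRem (k + 1) (θ * f y) * (g : S → ℂ) y‖₊ : ℝ≥0∞) ∂(P x)
        ≤ ENNReal.ofReal (c * |θ| ^ k * ‖g‖) := by
    filter_upwards [hLae] with x hx
    have hptw : ∀ y : S, (‖expRem (k + 1) (θ * f y)‖₊ : ℝ≥0∞)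
        ≤ ENNReal.ofReal (|θ| ^ (k+1) * L ^ (k+1) / (k+1).factorial)
          + Set.indicator {y : S | L < |f y|}
              (fun y => ENNReal.ofReal (2 * |θ| ^ k / k.factorial * |f y| ^ k)) y := by
      intro y
      rw [← enorm_eq_nnnorm, ← ofReal_norm, Set.indicator_apply]
      by_cases h : y ∈ {y : S | L < |f y|}
      · rw [if_pos h]
        refine le_trans (ENNReal.ofReal_le_ofReal ?_) le_add_self
        have h1 : ‖expRem (k + 1) (θ * f y)‖
            ≤ ‖expRem k (θ * f y)‖
              + ‖(Complex.I * ((θ * f y : ℝ) : ℂ)) ^ k / (k.factorial : ℂ)‖ := by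
          unfold expRem
          rw [Finset.sum_range_succ]
          refine le_trans (le_of_eq (congrArg norm (by ring))) (norm_sub_le _ _)
        have h2 : ‖(Complex.I * ((θ * f y : ℝ) : ℂ)) ^ k / (k.factorial : ℂ)‖
            = |θ * f y| ^ k / k.factorial := by
          rw [norm_div, norm_pow, norm_mul, Complex.norm_I, one_mul, Complex.norm_real,
            Real.norm_eq_abs]
          norm_num
        calc ‖expRem (k + 1) (θ * f y)‖
            ≤ |θ * f y| ^ k / k.factorial + |θ * f y| ^ k / k.factorial := by
              refine h1.trans (add_le_add ?_ h2.le)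
              exact norm_expRem_le k (θ * f y)
          _ = 2 * |θ| ^ k / k.factorial * |f y| ^ k := by
              rw [abs_mul, mul_pow]; ring
      · rw [if_neg h, add_zero]
        rw [Set.mem_setOf_eq, not_lt] at h
        refine ENNReal.ofReal_le_ofReal ?_
        refine (norm_expRem_le (k + 1) (θ * f y)).trans ?_
        rw [abs_mul, mul_pow]
        gcongr
    have hintbound :
        ∫⁻ y, (ENNReal.ofReal (|θ| ^ (k+1) * L ^ (k+1) / (k+1).factorial)
          + Set.indicator {y : S | L < |f y|}
              (fun y => ENNReal.ofReal (2 * |θ| ^ k / k.factorial * |f y| ^ k)) y) ∂(P x)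
          ≤ ENNReal.ofReal (c * |θ| ^ k) := by
      have heval :
          ∫⁻ y, (ENNReal.ofReal (|θ| ^ (k+1) * L ^ (k+1) / (k+1).factorial)
            + Set.indicator {y : S | L < |f y|}
                (fun y => ENNReal.ofReal (2 * |θ| ^ k / k.factorial * |f y| ^ k)) y) ∂(P x)
            = ENNReal.ofReal (|θ| ^ (k+1) * L ^ (k+1) / (k+1).factorial)
              + ENNReal.ofReal (2 * |θ| ^ k / k.factorial) * tail L x := by
        rw [lintegral_add_left measurable_const, lintegral_const, measure_univ, mul_one,
          lintegral_indicator (hmeasset L)]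
        congr 1
        rw [← lintegral_const_mul' _ _ ENNReal.ofReal_ne_top]
        refine lintegral_congr fun y => ?_
        rw [← ENNReal.ofReal_mul (by positivity)]
      rw [heval]
      have h1 : ENNReal.ofReal (2 * |θ| ^ k / k.factorial) * tail L x
          ≤ ENNReal.ofReal (2 * |θ| ^ k / k.factorial)
            * ENNReal.ofReal (c * k.factorial / 4) := mul_le_mul_right hx _
      refine le_trans (add_le_add_right h1 _) ?_
      rw [← ENNReal.ofReal_mul (by positivity),
        ← ENNReal.ofReal_add (by positivity) (by positivity)]
      refine ENNReal.ofReal_le_ofReal ?_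
      have hθδ : |θ| ≤ δ := hθ.le
      have e2 : 2 * |θ| ^ k / k.factorial * (c * k.factorial / 4) = c * |θ| ^ k / 2 := by
        field_simp
        ring
      have e3 : |θ| ^ (k+1) * L ^ (k+1) / (k+1).factorial ≤ c * |θ| ^ k / 2 := by
        have h4 : |θ| ^ (k+1) ≤ δ * |θ| ^ k := by
          rw [pow_succ, mul_comm δ (|θ| ^ k)]
          exact mul_le_mul_of_nonneg_left hθδ (by positivity)
        calc |θ| ^ (k+1) * L ^ (k+1) / (k+1).factorial
            ≤ (δ * |θ| ^ k) * L ^ (k+1) / (k+1).factorial := by gcongr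
          _ = c * |θ| ^ k / 2 := by
              rw [hδdef]
              field_simp
      linarith
    calc ∫⁻ y, (‖expRem (k + 1) (θ * f y) * (g : S → ℂ) y‖₊ : ℝ≥0∞) ∂(P x)
        ≤ ∫⁻ y, (ENNReal.ofReal (|θ| ^ (k+1) * L ^ (k+1) / (k+1).factorial)
            + Set.indicator {y : S | L < |f y|}
                (fun y => ENNReal.ofReal (2 * |θ| ^ k / k.factorial * |f y| ^ k)) y)
              * ENNReal.ofReal ‖g‖ ∂(P x) := by
          refine lintegral_mono_ae ?_
          filter_upwards [haeg x] with y hy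
          rw [nnnorm_mul, ENNReal.coe_mul]
          refine mul_le_mul' (hptw y) ?_
          rw [← enorm_eq_nnnorm, ← ofReal_norm]
          exact ENNReal.ofReal_le_ofReal hy
      _ = (∫⁻ y, (ENNReal.ofReal (|θ| ^ (k+1) * L ^ (k+1) / (k+1).factorial)
            + Set.indicator {y : S | L < |f y|}
                (fun y => ENNReal.ofReal (2 * |θ| ^ k / k.factorial * |f y| ^ k)) y) ∂(P x))
              * ENNReal.ofReal ‖g‖ := lintegral_mul_const' _ _ (by simp)
      _ ≤ ENNReal.ofReal (c * |θ| ^ k) * ENNReal.ofReal ‖g‖ :=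
          mul_le_mul_left hintbound _
      _ = ENNReal.ofReal (c * |θ| ^ k * ‖g‖) := by
          rw [← ENNReal.ofReal_mul (by positivity)]
  have hfinal : ∀ᵐ x ∂μ,
      ‖(((Phat θ - T) g : Lp ℂ ⊤ μ) : S → ℂ) x‖ ≤ c * |θ| ^ k * ‖g‖ := by
    filter_upwards [hDrep, hbound] with x h1 h2
    rw [h1]
    calc ‖∫ y, expRem (k + 1) (θ * f y) * (g : S → ℂ) y ∂(P x)‖
        ≤ (∫⁻ y, ENNReal.ofReal ‖expRem (k + 1) (θ * f y) * (g : S → ℂ) y‖ ∂(P x)).toReal :=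
          norm_integral_le_lintegral_norm _
      _ = (∫⁻ y, (‖expRem (k + 1) (θ * f y) * (g : S → ℂ) y‖₊ : ℝ≥0∞) ∂(P x)).toReal := by
          simp_rw [ofReal_norm, enorm_eq_nnnorm]
      _ ≤ c * |θ| ^ k * ‖g‖ := ENNReal.toReal_le_of_le_ofReal (by positivity) h2
  rw [Lp.norm_def, eLpNorm_exponent_top]
  refine ENNReal.toReal_le_of_le_ofReal (by positivity) ?_
  exact eLpNormEssSup_le_of_ae_bound hfinal


end Edgeworth
end
end

section
/- Suppose P is primitive, ‖P̂(θ) − Σ_{m=0}^{k} ((iθ)^m/m!) P^{(m)}‖ = o(|θ|^k) with all P^{(m)} bounded, and let λ^{(m)} and P̂₁^{(m)} denote the coefficients in the expansions λ(θ) = Σ_{m=0}^k ((iθ)^m/m!) λ^{(m)} + o(|θ|^k) and P̂₁(θ) = Σ_{m=0}^k ((iθ)^m/m!) P̂₁^{(m)} + o(|θ|^k), and set λ̂^{(ν)} := ∫ (P̂₁^{(ν)} 𝟙) dπ. If λ^{(0)} = λ̂^{(0)} = 1 and λ^{(1)} = λ̂^{(1)} = 0, then for every 2 ≤ m ≤ k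 the moments satisfy the recursion λ^{(m)} = Σ_{ν=1}^{m} C(m,ν) ∫ (P^{(ν)} P̂₁^{(m−ν)} 𝟙) dπ − Σ_{ν=2}^{m−2} C(m,ν) λ^{(ν)} λ̂^{(m−ν)}, where C(m,ν) is the binomial coefficient. -/
open MeasureTheory ProbabilityTheory Filter Complex Asymptotics
open scoped ENNReal Topology BigOperators NNReal

noncomputable section

namespace Edgeworth

variable {S : Type*} [MeasurableSpace S]

lemma Linfty_ae_le {S : Type*} [MeasurableSpace S] {μ : Measure S} (h : Lp ℂ ⊤ μ) :
    ∀ᵐ x ∂μ, ‖h x‖ ≤ ‖h‖ := by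
  have h1 : ∀ᵐ x ∂μ, (‖h x‖₊ : ℝ≥0∞) ≤ eLpNormEssSup h μ := ae_le_eLpNormEssSup
  have ht : eLpNormEssSup (h : S → ℂ) μ ≠ ⊤ := by
    rw [← eLpNorm_exponent_top]; exact Lp.eLpNorm_ne_top h
  filter_upwards [h1] with x hx
  have := ENNReal.toReal_mono ht hx
  simpa [Lp.norm_def, eLpNorm_exponent_top] using this

lemma poly_isLittleO_coeff_zero {N k : ℕ} {c : ℕ → ℂ}
    (h : (fun θ : ℝ => ∑ j ∈ Finset.range N, c j * (θ : ℂ) ^ j) =o[𝓝 (0:ℝ)]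
      fun θ => |θ| ^ k) :
    ∀ n, n ≤ k → n < N → c n = 0 := by
  intro n
  induction n using Nat.strong_induction_on with
  | _ n IH =>
  intro hnk hnN
  have hz : ∀ m, m < n → c m = 0 := fun m hm =>
    IH m hm (hm.le.trans hnk) (hm.trans hnN)
  set q : ℝ → ℂ := fun θ =>
    ∑ j ∈ Finset.range N, (if n ≤ j then c j * (θ : ℂ) ^ (j - n) else 0) with hq
  have hq0 : q 0 = c n := by
    show (∑ j ∈ Finset.range N, if n ≤ j then c j * ((0:ℝ) : ℂ) ^ (j - n) else 0) = c n
    rw [Finset.sum_eq_single n]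
    · simp
    · intro j hj hjn
      rcases lt_or_ge j n with h' | h'
      · simp [not_le.mpr h']
      · have h2 : j - n ≠ 0 := by omega
        simp [h', zero_pow h2]
    · intro hn; exact absurd (Finset.mem_range.mpr hnN) hn
  have hqcont : Continuous q := by
    apply continuous_finset_sum
    intro j _
    split_ifs
    · exact (continuous_const.mul ((Complex.continuous_ofReal).pow _))
    · exact continuous_const
  have hEq : ∀ θ : ℝ, θ ≠ 0 →
      (∑ j ∈ Finset.range N, c j * (θ : ℂ) ^ j) / (θ : ℂ) ^ n = q θ := by
    intro θ hθ
    have hθ' : (θ : ℂ) ≠ 0 := Complex.ofReal_ne_zero.mpr hθ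
    rw [div_eq_iff (pow_ne_zero _ hθ'), hq, Finset.sum_mul]
    apply Finset.sum_congr rfl
    intro j hj
    by_cases hle : n ≤ j
    · rw [if_pos hle, mul_assoc, ← pow_add]
      congr 2
      omega
    · rw [if_neg hle, hz j (by omega)]
      ring
  have hlim1 : Tendsto
      (fun θ : ℝ => (∑ j ∈ Finset.range N, c j * (θ : ℂ) ^ j) / (θ : ℂ) ^ n)
      (𝓝[≠] (0:ℝ)) (𝓝 (c n)) := by
    have hqt : Tendsto q (𝓝[≠] (0:ℝ)) (𝓝 (c n)) := by
      rw [← hq0]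
      exact (hqcont.tendsto 0).mono_left nhdsWithin_le_nhds
    refine hqt.congr' ?_
    filter_upwards [self_mem_nhdsWithin] with θ hθ
    exact (hEq θ hθ).symm
  have hlim2 : Tendsto
      (fun θ : ℝ => (∑ j ∈ Finset.range N, c j * (θ : ℂ) ^ j) / (θ : ℂ) ^ n)
      (𝓝[≠] (0:ℝ)) (𝓝 0) := by
    have h1 : (fun θ : ℝ => ∑ j ∈ Finset.range N, c j * (θ : ℂ) ^ j)
        =o[𝓝[≠] (0:ℝ)] fun θ : ℝ => (θ : ℂ) ^ n := by
      refine (h.mono nhdsWithin_le_nhds).trans_isBigO ?_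
      rw [Asymptotics.isBigO_iff]
      refine ⟨1, ?_⟩
      have hev : ∀ᶠ θ : ℝ in 𝓝[≠] (0:ℝ), |θ| ≤ 1 := by
        have : ∀ᶠ θ : ℝ in 𝓝 (0:ℝ), |θ| ≤ 1 := by
          filter_upwards [eventually_abs_sub_lt (0:ℝ) zero_lt_one] with θ hθ
          simpa using hθ.le
        exact this.filter_mono nhdsWithin_le_nhds
      filter_upwards [hev] with θ hθ
      have : |θ| ^ k ≤ |θ| ^ n := pow_le_pow_of_le_one (abs_nonneg θ) hθ hnk
      simp only [Real.norm_eq_abs, norm_pow, Complex.norm_real, one_mul, _root_.abs_pow,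
        _root_.abs_abs]
      exact this
    exact h1.tendsto_div_nhds_zero
  exact tendsto_nhds_unique hlim1 hlim2


/-- Integration over μ as a continuous linear functional on L^∞(μ;ℂ). -/
def intTop (μ : Measure S) [IsFiniteMeasure μ] : Lp ℂ ⊤ μ →L[ℂ] ℂ :=
  LinearMap.mkContinuous
    { toFun := fun g => ∫ x, g x ∂μ
      map_add' := fun g h => by
        show (∫ x, ((g + h : Lp ℂ ⊤ μ)) x ∂μ) = (∫ x, g x ∂μ) + ∫ x, h x ∂μ
        rw [integral_congr_ae (Lp.coeFn_add g h)]
        exact integral_add ((Lp.memLp g).integrable le_top)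
          ((Lp.memLp h).integrable le_top)
      map_smul' := fun c g => by
        show (∫ x, ((c • g : Lp ℂ ⊤ μ)) x ∂μ) = c • ∫ x, g x ∂μ
        rw [integral_congr_ae (Lp.coeFn_smul c g)]
        simpa using integral_smul c (fun x => g x) }
    (μ Set.univ).toReal
    (fun g => by
      have h1 := norm_integral_le_of_norm_le_const (μ := μ) (f := fun x => g x)
        (C := ‖g‖) (Linfty_ae_le g)
      simpa [mul_comm, measureReal_def] using h1)

lemma intTop_apply (μ : Measure S) [IsFiniteMeasure μ] (g : Lp ℂ ⊤ μ) :
    intTop μ g = ∫ x, g x ∂μ := rfl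


set_option maxHeartbeats 2000000
/-- recursion for the coefficients λ^{(m)} of the principal eigenvalue:
λ^{(m)} = Σ_{ν=1}^m C(m,ν) π(P^{(ν)} P̂₁^{(m−ν)} 𝟙) − Σ_{ν=2}^{m−2} C(m,ν) λ^{(ν)} λ̂^{(m−ν)}. -/
theorem eigenvalue_coefficients_recursion
    {S : Type*} [MeasurableSpace S] (μ : Measure S) [IsProbabilityMeasure μ]
    (P : Kernel S S) [IsMarkovKernel P] (f : S → ℝ) (hf : Measurable f)
    (π : Measure S) [IsProbabilityMeasure π] (hπ : Stationary P π)
    (Pop Pi : Lp ℂ ⊤ μ →L[ℂ] Lp ℂ ⊤ μ)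
    (hPop : ∀ g : Lp ℂ ⊤ μ, ∀ᵐ x ∂μ, Pop g x = ∫ y, g y ∂(P x))
    (hPi : ∀ g : Lp ℂ ⊤ μ, ∀ᵐ x ∂μ, Pi g x = ∫ y, g y ∂π)
    (Phat : ℝ → (Lp ℂ ⊤ μ →L[ℂ] Lp ℂ ⊤ μ))
    (hPhat : ∀ (θ : ℝ) (g : Lp ℂ ⊤ μ), ∀ᵐ x ∂μ,
      Phat θ g x = ∫ y, Complex.exp (Complex.I * θ * f y) * g y ∂(P x))
    -- primitivity of P
    (C γ : ℝ) (hC : 0 < C) (hγ : γ ∈ Set.Ico (0 : ℝ) 1)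
    (hprim : ∀ (g : Lp ℂ ⊤ μ) (n : ℕ), 1 ≤ n →
      ‖(Pop ^ n) g - Pi g‖ ≤ C * γ ^ n * ‖g‖)
    -- MacLaurin expansion of the characteristic operator, with bounded P^{(m)}
    (k : ℕ)
    (Pm : ℕ → (Lp ℂ ⊤ μ →L[ℂ] Lp ℂ ⊤ μ))
    (hPm : ∀ m : ℕ, m ≤ k → ∀ g : Lp ℂ ⊤ μ, ∀ᵐ x ∂μ,
      Pm m g x = ∫ y, (f y : ℂ) ^ m * g y ∂(P x))
    (hexp : (fun θ : ℝ =>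
        Phat θ - ∑ m ∈ Finset.range (k + 1),
          (((Complex.I * θ) ^ m / (m.factorial : ℂ)) • Pm m))
      =o[𝓝 0] fun θ : ℝ => |θ| ^ k)
    -- principal eigenvalue and eigenprojection near θ = 0
    (lam : ℝ → ℂ) (P1 : ℝ → (Lp ℂ ⊤ μ →L[ℂ] Lp ℂ ⊤ μ))
    (ε₀ : ℝ) (hε₀ : 0 < ε₀)
    (hproj : ∀ θ : ℝ, |θ| < ε₀ → P1 θ ∘L P1 θ = P1 θ)
    (hcomm : ∀ θ : ℝ, |θ| < ε₀ → Phat θ ∘L P1 θ = P1 θ ∘L Phat θ)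
    (heig : ∀ θ : ℝ, |θ| < ε₀ → Phat θ ∘L P1 θ = lam θ • P1 θ)
    (hlam0 : lam 0 = 1) (hP10 : P1 0 = Pi)
    (hP1cont : Tendsto (fun θ : ℝ => ‖P1 θ - Pi‖) (𝓝 0) (𝓝 0))
    -- expansion coefficients λ^{(m)} of λ(θ) and P̂₁^{(m)} of P̂₁(θ)
    (lamC : ℕ → ℂ) (P1m : ℕ → (Lp ℂ ⊤ μ →L[ℂ] Lp ℂ ⊤ μ))
    (hlamexp : (fun θ : ℝ =>
        lam θ - ∑ m ∈ Finset.range (k + 1), (Complex.I * θ) ^ m / (m.factorial : ℂ) * lamC m)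
      =o[𝓝 0] fun θ : ℝ => |θ| ^ k)
    (hP1exp : (fun θ : ℝ =>
        P1 θ - ∑ m ∈ Finset.range (k + 1),
          (((Complex.I * θ) ^ m / (m.factorial : ℂ)) • P1m m))
      =o[𝓝 0] fun θ : ℝ => |θ| ^ k)
    -- normalizations λ^{(0)} = λ̂^{(0)} = 1, λ^{(1)} = λ̂^{(1)} = 0
    (hl0 : lamC 0 = 1) (hl1 : lamC 1 = 0)
    (hlh0 : (∫ x, (P1m 0) (oneL μ) x ∂π) = 1)
    (hlh1 : (∫ x, (P1m 1) (oneL μ) x ∂π) = 0) :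
    ∀ m : ℕ, 2 ≤ m → m ≤ k →
      lamC m =
        (∑ ν ∈ Finset.Icc 1 m,
            (m.choose ν : ℂ) * ∫ x, (Pm ν) ((P1m (m - ν)) (oneL μ)) x ∂π)
        - ∑ ν ∈ Finset.Icc 2 (m - 2),
            (m.choose ν : ℂ) * lamC ν * ∫ x, (P1m (m - ν)) (oneL μ) x ∂π := by
  classical
  intro m hm2 hmk
  set one : Lp ℂ ⊤ μ := oneL μ with hone
  set T : Lp ℂ ⊤ μ →L[ℂ] ℂ := (intTop μ).comp Pi with hTdef
  have hT : ∀ g : Lp ℂ ⊤ μ, T g = ∫ x, g x ∂π := by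
    intro g
    have h1 : T g = ∫ x, (Pi g) x ∂μ := rfl
    rw [h1, integral_congr_ae (hPi g), integral_const]
    simp
  set A : ℝ → (Lp ℂ ⊤ μ →L[ℂ] Lp ℂ ⊤ μ) := fun θ =>
    ∑ j ∈ Finset.range (k + 1), (((Complex.I * θ) ^ j / (j.factorial : ℂ)) • Pm j) with hAdef
  set B : ℝ → (Lp ℂ ⊤ μ →L[ℂ] Lp ℂ ⊤ μ) := fun θ =>
    ∑ j ∈ Finset.range (k + 1), (((Complex.I * θ) ^ j / (j.factorial : ℂ)) • P1m j) with hBdef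
  set Λp : ℝ → ℂ := fun θ =>
    ∑ j ∈ Finset.range (k + 1), (Complex.I * θ) ^ j / (j.factorial : ℂ) * lamC j with hΛdef
  set lamh : ℕ → ℂ := fun b => T (P1m b one) with hlamhdef
  set Bh : ℝ → ℂ := fun θ =>
    ∑ j ∈ Finset.range (k + 1), (Complex.I * θ) ^ j / (j.factorial : ℂ) * lamh j with hBhdef
  have e1 : (fun θ : ℝ => Phat θ - A θ) =o[𝓝 (0:ℝ)] (fun θ : ℝ => |θ| ^ k) := hexp
  have e2 : (fun θ : ℝ => P1 θ - B θ) =o[𝓝 (0:ℝ)] (fun θ : ℝ => |θ| ^ k) := hP1exp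
  have e3 : (fun θ : ℝ => lam θ - Λp θ) =o[𝓝 (0:ℝ)] (fun θ : ℝ => |θ| ^ k) := hlamexp
  have hsmall : ∀ᶠ θ : ℝ in 𝓝 0, |θ| ≤ 1 := by
    filter_upwards [eventually_abs_sub_lt (0:ℝ) zero_lt_one] with θ hθ
    simpa using hθ.le
  have hnormIθ : ∀ (θ : ℝ) (j : ℕ),
      ‖(Complex.I * (θ:ℂ)) ^ j / (j.factorial : ℂ)‖ = |θ| ^ j / j.factorial := by
    intro θ j
    rw [norm_div, norm_pow, norm_mul, Complex.norm_I, one_mul, Complex.norm_real,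
      Real.norm_eq_abs, Complex.norm_natCast]
  have hcoefle : ∀ θ : ℝ, |θ| ≤ 1 → ∀ j : ℕ,
      ‖(Complex.I * (θ:ℂ)) ^ j / (j.factorial : ℂ)‖ ≤ 1 := by
    intro θ hθ j
    rw [hnormIθ]
    have h1 : |θ| ^ j ≤ 1 := pow_le_one₀ (abs_nonneg θ) hθ
    have h2 : (1:ℝ) ≤ (j.factorial : ℝ) := Nat.one_le_cast.mpr (Nat.factorial_pos j)
    rw [div_le_one (by positivity)]
    exact h1.trans h2
  have hAbd : ∀ᶠ θ : ℝ in 𝓝 0, ‖A θ‖ ≤ ∑ j ∈ Finset.range (k+1), ‖Pm j‖ := by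
    filter_upwards [hsmall] with θ hθ
    calc ‖A θ‖ ≤ ∑ j ∈ Finset.range (k+1), ‖((Complex.I * (θ:ℂ)) ^ j / (j.factorial : ℂ)) • Pm j‖ :=
          norm_sum_le _ _
    _ ≤ ∑ j ∈ Finset.range (k+1), ‖Pm j‖ := by
        apply Finset.sum_le_sum
        intro j _
        rw [norm_smul ((Complex.I * (θ:ℂ)) ^ j / (j.factorial : ℂ)) (Pm j)]
        calc ‖(Complex.I * (θ:ℂ)) ^ j / (j.factorial : ℂ)‖ * ‖Pm j‖ ≤ 1 * ‖Pm j‖ :=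
              mul_le_mul_of_nonneg_right (hcoefle θ hθ j) (norm_nonneg _)
        _ = ‖Pm j‖ := one_mul _
  have hΛbd : ∀ᶠ θ : ℝ in 𝓝 0, ‖Λp θ‖ ≤ ∑ j ∈ Finset.range (k+1), ‖lamC j‖ := by
    filter_upwards [hsmall] with θ hθ
    calc ‖Λp θ‖ ≤ ∑ j ∈ Finset.range (k+1), ‖(Complex.I * (θ:ℂ)) ^ j / (j.factorial : ℂ) * lamC j‖ :=
          norm_sum_le _ _
    _ ≤ ∑ j ∈ Finset.range (k+1), ‖lamC j‖ := by
        apply Finset.sum_le_sum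
        intro j _
        rw [norm_mul]
        calc ‖(Complex.I * (θ:ℂ)) ^ j / (j.factorial : ℂ)‖ * ‖lamC j‖ ≤ 1 * ‖lamC j‖ :=
              mul_le_mul_of_nonneg_right (hcoefle θ hθ j) (norm_nonneg _)
        _ = ‖lamC j‖ := one_mul _
  have hP1bd : ∀ᶠ θ : ℝ in 𝓝 0, ‖P1 θ‖ ≤ ‖Pi‖ + 1 := by
    have h1 : ∀ᶠ θ : ℝ in 𝓝 0, ‖P1 θ - Pi‖ ≤ 1 :=
      hP1cont.eventually (eventually_le_nhds zero_lt_one)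
    filter_upwards [h1] with θ hθ
    calc ‖P1 θ‖ = ‖(P1 θ - Pi) + Pi‖ := by rw [sub_add_cancel]
    _ ≤ ‖P1 θ - Pi‖ + ‖Pi‖ := norm_add_le _ _
    _ ≤ 1 + ‖Pi‖ := by gcongr
    _ = ‖Pi‖ + 1 := by ring
  have hP1one : ∀ᶠ θ : ℝ in 𝓝 0, ‖P1 θ one‖ ≤ (‖Pi‖ + 1) * ‖one‖ := by
    filter_upwards [hP1bd] with θ hθ
    calc ‖P1 θ one‖ ≤ ‖P1 θ‖ * ‖one‖ := (P1 θ).le_opNorm one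
    _ ≤ (‖Pi‖ + 1) * ‖one‖ := by gcongr
  have o1 : (fun θ : ℝ => (Phat θ - A θ) (P1 θ one)) =o[𝓝 (0:ℝ)] (fun θ => |θ| ^ k) := by
    refine IsBigO.trans_isLittleO ?_ e1
    refine IsBigO.of_bound ((‖Pi‖ + 1) * ‖one‖) ?_
    filter_upwards [hP1one] with θ hθ
    calc ‖(Phat θ - A θ) (P1 θ one)‖ ≤ ‖Phat θ - A θ‖ * ‖P1 θ one‖ :=
          (Phat θ - A θ).le_opNorm _
    _ ≤ ‖Phat θ - A θ‖ * ((‖Pi‖ + 1) * ‖one‖) := by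
        exact mul_le_mul_of_nonneg_left hθ (norm_nonneg _)
    _ = ((‖Pi‖ + 1) * ‖one‖) * ‖Phat θ - A θ‖ := by ring
  have o2 : (fun θ : ℝ => A θ ((P1 θ - B θ) one)) =o[𝓝 (0:ℝ)] (fun θ => |θ| ^ k) := by
    refine IsBigO.trans_isLittleO ?_ e2
    refine IsBigO.of_bound ((∑ j ∈ Finset.range (k+1), ‖Pm j‖) * ‖one‖) ?_
    filter_upwards [hAbd] with θ hθ
    calc ‖A θ ((P1 θ - B θ) one)‖ ≤ ‖A θ‖ * ‖(P1 θ - B θ) one‖ := (A θ).le_opNorm _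
    _ ≤ ‖A θ‖ * (‖P1 θ - B θ‖ * ‖one‖) :=
        mul_le_mul_of_nonneg_left ((P1 θ - B θ).le_opNorm _) (norm_nonneg _)
    _ ≤ (∑ j ∈ Finset.range (k+1), ‖Pm j‖) * (‖P1 θ - B θ‖ * ‖one‖) := by
        exact mul_le_mul_of_nonneg_right hθ (by positivity)
    _ = ((∑ j ∈ Finset.range (k+1), ‖Pm j‖) * ‖one‖) * ‖P1 θ - B θ‖ := by ring
  have h1o : (fun θ : ℝ => Phat θ (P1 θ one) - A θ (B θ one)) =o[𝓝 (0:ℝ)] (fun θ => |θ| ^ k) := by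
    refine (o1.add o2).congr (fun θ => ?_) (fun _ => rfl)
    simp only [ContinuousLinearMap.sub_apply, map_sub]
    abel
  have hTcomp : ∀ (w : ℝ → Lp ℂ ⊤ μ),
      ((fun θ => w θ) =o[𝓝 (0:ℝ)] fun θ => |θ| ^ k) →
      ((fun θ => T (w θ)) =o[𝓝 (0:ℝ)] fun θ => |θ| ^ k) := fun w hw =>
    (T.isBigO_comp w (𝓝 (0:ℝ))).trans_isLittleO hw
  have hF : (fun θ : ℝ => T (Phat θ (P1 θ one)) - T (A θ (B θ one)))
      =o[𝓝 (0:ℝ)] (fun θ => |θ| ^ k) := by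
    refine (hTcomp _ h1o).congr (fun θ => ?_) (fun _ => rfl)
    exact map_sub T _ _
  have hBhpoly : ∀ θ : ℝ, T (B θ one) = Bh θ := by
    intro θ
    have h1 : B θ one = ∑ j ∈ Finset.range (k+1),
        ((Complex.I * (θ:ℂ)) ^ j / (j.factorial : ℂ)) • (P1m j one) := by
      simp only [hBdef, ContinuousLinearMap.sum_apply, ContinuousLinearMap.smul_apply]
    rw [h1, map_sum]
    apply Finset.sum_congr rfl
    intro j _
    rw [_root_.map_smul, smul_eq_mul]
  have hTP1bd : (fun θ : ℝ => T (P1 θ one)) =O[𝓝 (0:ℝ)] (fun _ : ℝ => (1:ℝ)) := by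
    refine IsBigO.of_bound (‖T‖ * ((‖Pi‖ + 1) * ‖one‖)) ?_
    filter_upwards [hP1one] with θ hθ
    simp only [norm_one, mul_one]
    calc ‖T (P1 θ one)‖ ≤ ‖T‖ * ‖P1 θ one‖ := T.le_opNorm _
    _ ≤ ‖T‖ * ((‖Pi‖ + 1) * ‖one‖) := mul_le_mul_of_nonneg_left hθ (norm_nonneg _)
  have g1 : (fun θ : ℝ => (lam θ - Λp θ) * T (P1 θ one)) =o[𝓝 (0:ℝ)] (fun θ => |θ| ^ k) := by
    refine (e3.mul_isBigO hTP1bd).congr (fun _ => rfl) (fun θ => ?_)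
    rw [mul_one]
  have oP1B : (fun θ : ℝ => (P1 θ - B θ) one) =o[𝓝 (0:ℝ)] (fun θ => |θ| ^ k) := by
    refine IsBigO.trans_isLittleO ?_ e2
    refine IsBigO.of_bound ‖one‖ ?_
    filter_upwards with θ
    calc ‖(P1 θ - B θ) one‖ ≤ ‖P1 θ - B θ‖ * ‖one‖ := (P1 θ - B θ).le_opNorm _
    _ = ‖one‖ * ‖P1 θ - B θ‖ := by ring
  have hTB : (fun θ : ℝ => T (P1 θ one) - Bh θ) =o[𝓝 (0:ℝ)] (fun θ => |θ| ^ k) := by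
    refine (hTcomp _ oP1B).congr (fun θ => ?_) (fun _ => rfl)
    rw [ContinuousLinearMap.sub_apply, map_sub, hBhpoly θ]
  have oΛ : (fun θ : ℝ => Λp θ) =O[𝓝 (0:ℝ)] (fun _ : ℝ => (1:ℝ)) := by
    refine IsBigO.of_bound (∑ j ∈ Finset.range (k+1), ‖lamC j‖) ?_
    filter_upwards [hΛbd] with θ hθ
    rw [norm_one, mul_one]
    exact hθ
  have g2 : (fun θ : ℝ => Λp θ * (T (P1 θ one) - Bh θ)) =o[𝓝 (0:ℝ)] (fun θ => |θ| ^ k) := by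
    refine (oΛ.mul_isLittleO hTB).congr (fun _ => rfl) (fun θ => ?_)
    rw [one_mul]
  have hG : (fun θ : ℝ => lam θ * T (P1 θ one) - Λp θ * Bh θ) =o[𝓝 (0:ℝ)] (fun θ => |θ| ^ k) := by
    refine (g1.add g2).congr (fun θ => ?_) (fun _ => rfl)
    ring
  have hFG : ∀ᶠ θ : ℝ in 𝓝 0, T (Phat θ (P1 θ one)) = lam θ * T (P1 θ one) := by
    have hev : ∀ᶠ θ : ℝ in 𝓝 (0:ℝ), |θ| < ε₀ := by
      filter_upwards [eventually_abs_sub_lt (0:ℝ) hε₀] with θ hθ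
      simpa using hθ
    filter_upwards [hev] with θ hθ
    have h1 : Phat θ (P1 θ one) = lam θ • (P1 θ one) := by
      have h2 := heig θ hθ
      calc Phat θ (P1 θ one) = (Phat θ ∘L P1 θ) one := rfl
      _ = (lam θ • P1 θ) one := by rw [h2]
      _ = lam θ • (P1 θ one) := rfl
    rw [h1, _root_.map_smul, smul_eq_mul]
  have hFG0 : (fun θ : ℝ => T (Phat θ (P1 θ one)) - lam θ * T (P1 θ one))
      =o[𝓝 (0:ℝ)] (fun θ => |θ| ^ k) := by
    refine (Asymptotics.isLittleO_zero _ _).congr' ?_ EventuallyEq.rfl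
    filter_upwards [hFG] with θ h
    simp [h]
  have hD : (fun θ : ℝ => T (A θ (B θ one)) - Λp θ * Bh θ) =o[𝓝 (0:ℝ)] (fun θ => |θ| ^ k) := by
    refine ((hFG0.sub hF).add hG).congr (fun θ => ?_) (fun _ => rfl)
    ring
  set d : ℕ × ℕ → ℂ := fun p => T (Pm p.1 (P1m p.2 one)) - lamC p.1 * lamh p.2 with hddef
  set cc : ℕ → ℂ := fun j => Complex.I ^ j *
    ∑ p ∈ (Finset.range (k+1) ×ˢ Finset.range (k+1)).filter (fun p => p.1 + p.2 = j),
      d p / ((p.1.factorial : ℂ) * (p.2.factorial : ℂ)) with hccdef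
  have hpoly : ∀ θ : ℝ, T (A θ (B θ one)) - Λp θ * Bh θ
      = ∑ j ∈ Finset.range (2*k+1), cc j * (θ:ℂ) ^ j := by
    intro θ
    have hTA : T (A θ (B θ one)) = ∑ p ∈ Finset.range (k+1) ×ˢ Finset.range (k+1),
        ((Complex.I * (θ:ℂ)) ^ p.1 / (p.1.factorial : ℂ)) *
          (((Complex.I * (θ:ℂ)) ^ p.2 / (p.2.factorial : ℂ)) * T (Pm p.1 (P1m p.2 one))) := by
      have hB1 : B θ one = ∑ b ∈ Finset.range (k+1),
          ((Complex.I * (θ:ℂ)) ^ b / (b.factorial : ℂ)) • (P1m b one) := by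
        simp only [hBdef, ContinuousLinearMap.sum_apply, ContinuousLinearMap.smul_apply]
      have hA1 : ∀ v, A θ v = ∑ a ∈ Finset.range (k+1),
          ((Complex.I * (θ:ℂ)) ^ a / (a.factorial : ℂ)) • Pm a v := by
        intro v
        simp only [hAdef, ContinuousLinearMap.sum_apply, ContinuousLinearMap.smul_apply]
      rw [hB1, hA1, Finset.sum_product]
      simp only [map_sum, _root_.map_smul, smul_eq_mul, Finset.mul_sum]
    have hΛBh : Λp θ * Bh θ = ∑ p ∈ Finset.range (k+1) ×ˢ Finset.range (k+1),
        ((Complex.I * (θ:ℂ)) ^ p.1 / (p.1.factorial : ℂ) * lamC p.1) *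
          ((Complex.I * (θ:ℂ)) ^ p.2 / (p.2.factorial : ℂ) * lamh p.2) := by
      simp only [hΛdef, hBhdef]
      rw [Finset.sum_mul_sum, Finset.sum_product]
    have hmaps : ∀ p ∈ Finset.range (k+1) ×ˢ Finset.range (k+1),
        p.1 + p.2 ∈ Finset.range (2*k+1) := by
      intro p hp
      simp only [Finset.mem_product, Finset.mem_range] at hp ⊢
      omega
    calc T (A θ (B θ one)) - Λp θ * Bh θ
        = ∑ p ∈ Finset.range (k+1) ×ˢ Finset.range (k+1),
            ((Complex.I * (θ:ℂ)) ^ (p.1 + p.2) / ((p.1.factorial : ℂ) * (p.2.factorial : ℂ))) * d p := by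
          rw [hTA, hΛBh, ← Finset.sum_sub_distrib]
          apply Finset.sum_congr rfl
          intro p _
          simp only [hddef]
          rw [pow_add]
          ring
    _ = ∑ j ∈ Finset.range (2*k+1), ∑ p ∈ (Finset.range (k+1) ×ˢ Finset.range (k+1)).filter
            (fun p => p.1 + p.2 = j),
          ((Complex.I * (θ:ℂ)) ^ (p.1 + p.2) / ((p.1.factorial : ℂ) * (p.2.factorial : ℂ))) * d p :=
        (Finset.sum_fiberwise_of_maps_to hmaps _).symm
    _ = ∑ j ∈ Finset.range (2*k+1), cc j * (θ:ℂ) ^ j := by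
        apply Finset.sum_congr rfl
        intro j _
        simp only [hccdef]
        rw [Finset.mul_sum, Finset.sum_mul]
        apply Finset.sum_congr rfl
        intro p hp
        have hpj : p.1 + p.2 = j := (Finset.mem_filter.mp hp).2
        rw [← hpj, mul_pow]
        ring
  have hD2 : (fun θ : ℝ => ∑ j ∈ Finset.range (2*k+1), cc j * (θ:ℂ) ^ j)
      =o[𝓝 (0:ℝ)] (fun θ => |θ| ^ k) :=
    hD.congr (fun θ => hpoly θ) (fun _ => rfl)
  have hccm : cc m = 0 := poly_isLittleO_coeff_zero hD2 m hmk (by omega)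
  have hsum0 : ∑ p ∈ (Finset.range (k+1) ×ˢ Finset.range (k+1)).filter (fun p => p.1 + p.2 = m),
      d p / ((p.1.factorial : ℂ) * (p.2.factorial : ℂ)) = 0 := by
    have hI : (Complex.I) ^ m ≠ 0 := pow_ne_zero _ Complex.I_ne_zero
    simp only [hccdef] at hccm
    exact (mul_eq_zero.mp hccm).resolve_left hI
  have hre : ∑ ν ∈ Finset.range (m+1),
      d (ν, m - ν) / ((ν.factorial : ℂ) * ((m-ν).factorial : ℂ)) = 0 := by
    rw [← hsum0]
    refine Finset.sum_bij' (fun ν _ => (ν, m - ν)) (fun p _ => p.1) ?_ ?_ ?_ ?_ ?_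
    · intro a ha
      simp only [Finset.mem_range] at ha
      simp only [Finset.mem_filter, Finset.mem_product, Finset.mem_range]
      omega
    · intro p hp
      simp only [Finset.mem_filter, Finset.mem_product, Finset.mem_range] at hp
      simp only [Finset.mem_range]
      omega
    · intro a ha
      rfl
    · intro p hp
      simp only [Finset.mem_filter, Finset.mem_product, Finset.mem_range] at hp
      have : m - p.1 = p.2 := by omega
      exact Prod.ext rfl this
    · intro a ha
      rfl
  have key : ∑ ν ∈ Finset.range (m+1), (m.choose ν : ℂ) * d (ν, m - ν) = 0 := by
    have h2 := congrArg (fun z => (m.factorial : ℂ) * z) hre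
    simp only [Finset.mul_sum, mul_zero] at h2
    rw [← h2]
    apply Finset.sum_congr rfl
    intro ν hν
    have hνm : ν ≤ m := by
      simp only [Finset.mem_range] at hν
      omega
    have hfac : (m.choose ν : ℂ) * (ν.factorial : ℂ) * ((m-ν).factorial : ℂ) = (m.factorial : ℂ) := by
      exact_mod_cast congrArg (Nat.cast : ℕ → ℂ) (Nat.choose_mul_factorial_mul_factorial hνm)
    have hX1 : (ν.factorial : ℂ) ≠ 0 := Nat.cast_ne_zero.mpr (Nat.factorial_ne_zero ν)
    have hX2 : ((m-ν).factorial : ℂ) ≠ 0 := Nat.cast_ne_zero.mpr (Nat.factorial_ne_zero (m-ν))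
    field_simp
    linear_combination d (ν, m - ν) * hfac
  set u : ℕ → ℂ := fun ν => (m.choose ν : ℂ) * T (Pm ν (P1m (m-ν) one)) with hudef
  set t : ℕ → ℂ := fun ν => (m.choose ν : ℂ) * lamC ν * lamh (m-ν) with htdef
  have hkey2 : ∑ ν ∈ Finset.range (m+1), u ν = ∑ ν ∈ Finset.range (m+1), t ν := by
    have hsub0 : ∑ ν ∈ Finset.range (m+1), (u ν - t ν) = 0 := by
      rw [← key]
      apply Finset.sum_congr rfl
      intro ν _
      simp only [hudef, htdef, hddef]
      ring
    rw [Finset.sum_sub_distrib] at hsub0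
    exact sub_eq_zero.mp hsub0
  have hPm0 : Pm 0 = Pop := by
    refine ContinuousLinearMap.ext fun g => ?_
    refine Lp.ext ?_
    filter_upwards [hPm 0 (Nat.zero_le k) g, hPop g] with x hx1 hx2
    rw [hx1, hx2]
    simp
  have hPiPop : ∀ g, Pi (Pop g) = Pi g := by
    intro g
    have hlim : ∀ n : ℕ, 1 ≤ n →
        ‖Pi (Pop g) - Pi g‖ ≤ C * γ ^ n * ‖Pop g‖ + C * γ ^ (n+1) * ‖g‖ := by
      intro n hn
      have hh1 := hprim (Pop g) n hn
      have hh2 := hprim g (n+1) (by omega)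
      have h3 : (Pop ^ n) (Pop g) = (Pop ^ (n+1)) g := by
        rw [pow_succ]
        rfl
      have h4 : Pi (Pop g) - Pi g
          = (Pi (Pop g) - (Pop ^ n) (Pop g)) + ((Pop ^ (n+1)) g - Pi g) := by
        rw [h3]
        abel
      calc ‖Pi (Pop g) - Pi g‖
          ≤ ‖Pi (Pop g) - (Pop ^ n) (Pop g)‖ + ‖(Pop ^ (n+1)) g - Pi g‖ := by
            rw [h4]; exact norm_add_le _ _
      _ ≤ C * γ ^ n * ‖Pop g‖ + C * γ ^ (n+1) * ‖g‖ := by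
            refine add_le_add ?_ hh2
            rw [norm_sub_rev]
            exact hh1
    have htend : Tendsto (fun n : ℕ => C * γ ^ n * ‖Pop g‖ + C * γ ^ (n+1) * ‖g‖)
        atTop (𝓝 0) := by
      have hγt := tendsto_pow_atTop_nhds_zero_of_lt_one hγ.1 hγ.2
      have t1 : Tendsto (fun n : ℕ => C * γ ^ n * ‖Pop g‖) atTop (𝓝 0) := by
        simpa using (hγt.const_mul C).mul_const ‖Pop g‖
      have t2 : Tendsto (fun n : ℕ => C * γ ^ (n+1) * ‖g‖) atTop (𝓝 0) := by
        simpa using ((hγt.comp (tendsto_add_atTop_nat 1)).const_mul C).mul_const ‖g‖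
      simpa using t1.add t2
    have hle : ‖Pi (Pop g) - Pi g‖ ≤ 0 := by
      refine ge_of_tendsto htend ?_
      filter_upwards [eventually_ge_atTop 1] with n hn
      exact hlim n hn
    have h0 : Pi (Pop g) - Pi g = 0 := norm_le_zero_iff.mp hle
    exact sub_eq_zero.mp h0
  have hTPop : ∀ g, T (Pop g) = T g := by
    intro g
    show intTop μ (Pi (Pop g)) = intTop μ (Pi g)
    rw [hPiPop]
  have hu0 : u 0 = lamh m := by
    simp only [hudef, hlamhdef, Nat.choose_zero_right, Nat.cast_one, one_mul, Nat.sub_zero,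
      hPm0, hTPop]
  have herase : (Finset.range (m+1)).erase 0 = Finset.Icc 1 m := by
    ext a
    simp only [Finset.mem_erase, Finset.mem_range, Finset.mem_Icc]
    omega
  have hLHS : ∑ ν ∈ Finset.range (m+1), u ν = lamh m + ∑ ν ∈ Finset.Icc 1 m, u ν := by
    have hmem0 : (0:ℕ) ∈ Finset.range (m+1) := Finset.mem_range.mpr (by omega)
    rw [← Finset.add_sum_erase _ u hmem0, hu0, herase]
  have hlamh0 : lamh 0 = 1 := by
    simp only [hlamhdef]
    rw [hT]
    exact hlh0
  have hlamh1 : lamh 1 = 0 := by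
    simp only [hlamhdef]
    rw [hT]
    exact hlh1
  have ht0 : t 0 = lamh m := by
    simp only [htdef, hl0, Nat.choose_zero_right, Nat.cast_one, one_mul, mul_one, Nat.sub_zero]
  have htm : t m = lamC m := by
    simp only [htdef, Nat.choose_self, Nat.cast_one, one_mul, Nat.sub_self, hlamh0, mul_one]
  have hsubset : Finset.Icc 2 (m-2) ⊆ Finset.range (m+1) := by
    intro a ha
    simp only [Finset.mem_Icc] at ha
    simp only [Finset.mem_range]
    omega
  have hRHS : ∑ ν ∈ Finset.range (m+1), t ν
      = lamh m + lamC m + ∑ ν ∈ Finset.Icc 2 (m-2), t ν := by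
    rw [← Finset.sum_sdiff hsubset]
    have hrw : ∀ ν ∈ Finset.range (m+1) \ Finset.Icc 2 (m-2),
        t ν = (if ν = 0 then lamh m else 0) + (if ν = m then lamC m else 0) := by
      intro ν hν
      simp only [Finset.mem_sdiff, Finset.mem_range, Finset.mem_Icc, not_and, not_le] at hν
      have hcase : ν = 0 ∨ ν = 1 ∨ ν = m - 1 ∨ ν = m := by omega
      rcases hcase with h | h | h | h
      · subst h
        rw [ht0]
        simp [show (0:ℕ) ≠ m by omega]
      · subst h
        simp only [htdef, hl1, mul_zero, zero_mul]
        simp [show ¬(1:ℕ) = m by omega]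
      · subst h
        have hq1 : m - (m - 1) = 1 := by omega
        simp only [htdef, hq1, hlamh1, mul_zero]
        simp [show ¬(m - 1 = 0) by omega, show ¬(m - 1 = m) by omega]
      · rw [h, htm]
        simp [show ¬(m = 0) by omega]
    rw [Finset.sum_congr rfl hrw, Finset.sum_add_distrib]
    rw [Finset.sum_ite_eq', Finset.sum_ite_eq']
    have h0mem : (0:ℕ) ∈ Finset.range (m+1) \ Finset.Icc 2 (m-2) := by
      simp only [Finset.mem_sdiff, Finset.mem_range, Finset.mem_Icc]
      omega
    have hmmem : m ∈ Finset.range (m+1) \ Finset.Icc 2 (m-2) := by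
      simp only [Finset.mem_sdiff, Finset.mem_range, Finset.mem_Icc]
      omega
    rw [if_pos h0mem, if_pos hmmem]
  rw [hLHS, hRHS] at hkey2
  have hfinal : lamC m = (∑ ν ∈ Finset.Icc 1 m, u ν) - ∑ ν ∈ Finset.Icc 2 (m-2), t ν := by
    linear_combination -hkey2
  have hresL : ∑ ν ∈ Finset.Icc 1 m, u ν = ∑ ν ∈ Finset.Icc 1 m,
      (m.choose ν : ℂ) * ∫ x, (Pm ν) ((P1m (m - ν)) one) x ∂π := by
    apply Finset.sum_congr rfl
    intro ν _
    simp only [hudef]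
    rw [hT]
  have hresR : ∑ ν ∈ Finset.Icc 2 (m-2), t ν = ∑ ν ∈ Finset.Icc 2 (m-2),
      (m.choose ν : ℂ) * lamC ν * ∫ x, (P1m (m - ν)) one x ∂π := by
    apply Finset.sum_congr rfl
    intro ν _
    simp only [htdef, hlamhdef]
    rw [hT]
  rw [hfinal, hresL, hresR]

end Edgeworth
end
end
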